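/- The net (m,n) ↦ 1/((m + 1)(m + 3) + (m + 2)·n), (m,n) ∈ ℤ₊², is joint completely monotone, even though with b_1 = 1, b_2 = 3, a_1 = 2 neither b_1·b_2 ≤ a_1 nor b_1 + b_2 ≤ a_1 holds (showing that the necessary conditions ∏ b_j ≤ ∏ a_j and ∑ b_j ≤ ∑ a_j for the case deg a = deg b fail to be necessary when deg b = deg a + 1). -/
import Mathlib


open MeasureTheory Filter

/-- First partial forward difference. -/
def Delta1 (x : ℕ → ℕ → ℝ) : ℕ → ℕ → ℝ := fun m n => x (m + 1) n - x m n

/-- Second partial forward difference. -/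
def Delta2 (x : ℕ → ℕ → ℝ) : ℕ → ℕ → ℝ := fun m n => x m (n + 1) - x m n

/-- A net indexed by ℤ₊² is joint completely monotone. -/
def JointCM (x : ℕ → ℕ → ℝ) : Prop :=
  ∀ i j m n : ℕ, 0 ≤ (-1 : ℝ) ^ (i + j) * (Delta1^[i] (Delta2^[j] x)) m n

/-- Forward difference of a sequence. -/
def DeltaSeq (x : ℕ → ℝ) : ℕ → ℝ := fun m => x (m + 1) - x m

/-- A sequence is completely monotone. -/
def CM (x : ℕ → ℝ) : Prop :=
  ∀ k m : ℕ, 0 ≤ (-1 : ℝ) ^ k * (DeltaSeq^[k] x) m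

/-- A sequence is a Hausdorff moment sequence. -/
def IsHausdorffMoment (β : ℕ → ℝ) : Prop :=
  ∃ μ : Measure ℝ, IsFiniteMeasure μ ∧ μ (Set.Icc (0 : ℝ) 1)ᶜ = 0 ∧
    ∀ m : ℕ, β m = ∫ s in Set.Icc (0 : ℝ) 1, s ^ m ∂μ

open Finset

lemma deltaSeq_iter_const_mul (c : ℝ) (f : ℕ → ℝ) (k m : ℕ) :
    DeltaSeq^[k] (fun x => c * f x) m = c * DeltaSeq^[k] f m := by
  induction k generalizing f m with
  | zero => rfl
  | succ k ih =>
    rw [Function.iterate_succ_apply, Function.iterate_succ_apply]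
    have : DeltaSeq (fun x => c * f x) = fun x => c * DeltaSeq f x := by
      funext x; simp [DeltaSeq]; ring
    rw [this, ih]

lemma deltaSeq_iter_add (f g : ℕ → ℝ) (k m : ℕ) :
    DeltaSeq^[k] (fun x => f x + g x) m = DeltaSeq^[k] f m + DeltaSeq^[k] g m := by
  induction k generalizing f g m with
  | zero => rfl
  | succ k ih =>
    rw [Function.iterate_succ_apply, Function.iterate_succ_apply,
      Function.iterate_succ_apply]
    have : DeltaSeq (fun x => f x + g x) = fun x => DeltaSeq f x + DeltaSeq g x := by
      funext x; simp [DeltaSeq]; ring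
    rw [this, ih]

lemma deltaSeq_iter_shift (f : ℕ → ℝ) (c k m : ℕ) :
    DeltaSeq^[k] (fun x => f (x + c)) m = DeltaSeq^[k] f (m + c) := by
  induction k generalizing m with
  | zero => rfl
  | succ k ih =>
    rw [Function.iterate_succ_apply', Function.iterate_succ_apply']
    simp only [DeltaSeq, ih]
    rw [Nat.add_right_comm]

lemma deltaSeq_apply_succ (f : ℕ → ℝ) (k m : ℕ) :
    DeltaSeq^[k] f (m + 1) = DeltaSeq^[k] f m + DeltaSeq^[k+1] f m := by
  rw [Function.iterate_succ_apply']
  simp [DeltaSeq]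

open Finset in
lemma deltaSeq_iter_mul (f g : ℕ → ℝ) (k m : ℕ) :
    DeltaSeq^[k] (fun x => f x * g x) m
      = ∑ a ∈ range (k+1), (k.choose a : ℝ) * DeltaSeq^[a] f m * DeltaSeq^[k-a] g (m+a) := by
  induction k generalizing f g m with
  | zero => simp
  | succ k ih =>
    rw [Function.iterate_succ_apply]
    have hD : DeltaSeq (fun x => f x * g x)
        = fun x => (f (x+1) * DeltaSeq g x) + (DeltaSeq f x * g x) := by
      funext x; simp [DeltaSeq]; ring
    rw [hD]
    rw [deltaSeq_iter_add (fun x => f (x+1) * DeltaSeq g x) (fun x => DeltaSeq f x * g x) k m]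
    rw [ih (fun x => f (x+1)) (DeltaSeq g) m, ih (DeltaSeq f) g m]
    -- rewrite shifted f and iterated Delta g
    have e1 : ∀ a ∈ range (k+1),
        (k.choose a : ℝ) * DeltaSeq^[a] (fun x => f (x+1)) m * DeltaSeq^[k-a] (DeltaSeq g) (m+a)
        = (k.choose a : ℝ) * (DeltaSeq^[a] f m + DeltaSeq^[a+1] f m) * DeltaSeq^[k+1-a] g (m+a) := by
      intro a ha
      have hak : a ≤ k := by simpa [Nat.lt_succ_iff] using mem_range.mp ha
      have hsub : (k-a)+1 = k+1-a := by omega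
      rw [deltaSeq_iter_shift, deltaSeq_apply_succ, ← Function.iterate_succ_apply, Nat.succ_eq_add_one, hsub]
    rw [Finset.sum_congr rfl e1]
    have e2 : ∀ a ∈ range (k+1),
        (k.choose a : ℝ) * DeltaSeq^[a] (DeltaSeq f) m * DeltaSeq^[k-a] g (m+a)
        = (k.choose a : ℝ) * DeltaSeq^[a+1] f m * DeltaSeq^[k-a] g (m+a) := by
      intro a ha
      rw [← Function.iterate_succ_apply]
    rw [Finset.sum_congr rfl e2]
    -- expand the first sum
    have split : ∑ a ∈ range (k+1),
        (k.choose a : ℝ) * (DeltaSeq^[a] f m + DeltaSeq^[a+1] f m) * DeltaSeq^[k+1-a] g (m+a)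
        = (∑ a ∈ range (k+1), (k.choose a : ℝ) * DeltaSeq^[a] f m * DeltaSeq^[k+1-a] g (m+a))
          + ∑ a ∈ range (k+1), (k.choose a : ℝ) * DeltaSeq^[a+1] f m * DeltaSeq^[k+1-a] g (m+a) := by
      rw [← Finset.sum_add_distrib]
      exact Finset.sum_congr rfl (fun a _ => by ring)
    rw [split]
    -- combine second and third sums
    have comb : (∑ a ∈ range (k+1), (k.choose a : ℝ) * DeltaSeq^[a+1] f m * DeltaSeq^[k+1-a] g (m+a))
        + ∑ a ∈ range (k+1), (k.choose a : ℝ) * DeltaSeq^[a+1] f m * DeltaSeq^[k-a] g (m+a)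
        = ∑ a ∈ range (k+1), (k.choose a : ℝ) * DeltaSeq^[a+1] f m * DeltaSeq^[k-a] g (m+a+1) := by
      rw [← Finset.sum_add_distrib]
      refine Finset.sum_congr rfl (fun a ha => ?_)
      have hak : a ≤ k := by simpa [Nat.lt_succ_iff] using mem_range.mp ha
      rw [deltaSeq_apply_succ g (k-a) (m+a)]
      have h2 : k + 1 - a = k - a + 1 := by omega
      rw [h2]; ring
    rw [add_assoc, comb]
    -- split the target (RHS) and the first sum (LHS) at their bottom index
    have hT : ∑ a ∈ range (k+1+1), ((k+1).choose a : ℝ) * DeltaSeq^[a] f m * DeltaSeq^[k+1-a] g (m+a)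
        = (∑ a ∈ range (k+1), ((k+1).choose (a+1) : ℝ) * DeltaSeq^[a+1] f m * DeltaSeq^[k-a] g (m+a+1))
          + f m * DeltaSeq^[k+1] g m := by
      rw [Finset.sum_range_succ']
      simp only [Nat.choose_zero_right, Nat.cast_one, Function.iterate_zero_apply,
        Nat.sub_zero, Nat.add_zero, one_mul]
      refine congrArg₂ _ (Finset.sum_congr rfl fun a _ => ?_) rfl
      have h : k + 1 - (a+1) = k - a := by omega
      rw [h, Nat.add_assoc]
    have hS1 : ∑ a ∈ range (k+1), (k.choose a : ℝ) * DeltaSeq^[a] f m * DeltaSeq^[k+1-a] g (m+a)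
        = (∑ a ∈ range (k+1), (k.choose (a+1) : ℝ) * DeltaSeq^[a+1] f m * DeltaSeq^[k-a] g (m+a+1))
          + f m * DeltaSeq^[k+1] g m := by
      rw [Finset.sum_range_succ
        (fun a => (k.choose (a+1) : ℝ) * DeltaSeq^[a+1] f m * DeltaSeq^[k-a] g (m+a+1)) k]
      rw [Finset.sum_range_succ'
        (fun a => (k.choose a : ℝ) * DeltaSeq^[a] f m * DeltaSeq^[k+1-a] g (m+a)) k]
      simp only [Nat.choose_succ_self, Nat.cast_zero, zero_mul, add_zero,
        Nat.choose_zero_right, Nat.cast_one, Function.iterate_zero_apply,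
        Nat.sub_zero, Nat.add_zero, one_mul]
      refine congrArg₂ _ (Finset.sum_congr rfl fun a _ => ?_) rfl
      have h : k + 1 - (a+1) = k - a := by omega
      rw [h, Nat.add_assoc]
    rw [hT, hS1]
    rw [add_right_comm]
    congr 1
    rw [← Finset.sum_add_distrib]
    refine Finset.sum_congr rfl (fun a ha => ?_)
    rw [Nat.choose_succ_succ]
    push_cast
    ring

noncomputable def Qp (c : ℝ) (r : ℕ) (m : ℕ) : ℝ := ∏ t ∈ range r, ((m : ℝ) + c + t)

lemma Qp_pos {c : ℝ} (hc : 0 < c) (r m : ℕ) : 0 < Qp c r m :=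
  Finset.prod_pos fun t _ => by positivity

lemma Qp_succ (c : ℝ) (r m : ℕ) : Qp c (r+1) m = Qp c r m * ((m : ℝ) + c + r) :=
  Finset.prod_range_succ _ _

lemma Qp_shift (c : ℝ) (r m : ℕ) : Qp c (r+1) m = Qp c r (m+1) * ((m : ℝ) + c) := by
  rw [Qp, Finset.prod_range_succ']
  congr 1
  · refine Finset.prod_congr rfl fun t _ => ?_
    push_cast; ring
  · norm_num

lemma deltaSeq_one_div_Qp {c : ℝ} (hc : 0 < c) (r : ℕ) :
    DeltaSeq (fun m => 1 / Qp c r m) = fun m => -(r : ℝ) * (1 / Qp c (r+1) m) := by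
  funext m
  have h1 : (0:ℝ) < Qp c r m := Qp_pos hc r m
  have h2 : (0:ℝ) < Qp c r (m+1) := Qp_pos hc r (m+1)
  have h3 : (0:ℝ) < Qp c (r+1) m := Qp_pos hc (r+1) m
  have hs := Qp_shift c r m
  have ht := Qp_succ c r m
  have hmc : (0:ℝ) < (m:ℝ) + c := by positivity
  have hmcr : (0:ℝ) < (m:ℝ) + c + (r:ℝ) := by positivity
  have e1 : (1:ℝ) / Qp c r (m+1) = ((m:ℝ)+c) / Qp c (r+1) m := by
    rw [hs, mul_comm, div_mul_eq_div_div, div_self hmc.ne']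
  have e2 : (1:ℝ) / Qp c r m = ((m:ℝ)+c+(r:ℝ)) / Qp c (r+1) m := by
    rw [ht, mul_comm, div_mul_eq_div_div, div_self hmcr.ne']
  simp only [DeltaSeq]
  rw [e1, e2]
  ring

lemma deltaSeq_iter_one_div_Qp {c : ℝ} (hc : 0 < c) (k r m : ℕ) :
    DeltaSeq^[k] (fun m => 1 / Qp c r m) m
      = (-1)^k * (∏ t ∈ range k, ((r : ℝ) + t)) * (1 / Qp c (r+k) m) := by
  induction k generalizing r m with
  | zero => simp
  | succ k ih =>
    rw [Function.iterate_succ_apply, deltaSeq_one_div_Qp hc r]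
    rw [deltaSeq_iter_const_mul, ih (r+1) m]
    have hp : ∏ t ∈ range (k+1), ((r:ℝ) + t) = (r:ℝ) * ∏ t ∈ range k, ((r:ℝ) + 1 + t) := by
      rw [Finset.prod_range_succ']
      have h0 : ((r:ℝ) + ((0:ℕ):ℝ)) = (r:ℝ) := by norm_num
      rw [h0, mul_comm]
      congr 1
      refine Finset.prod_congr rfl fun t _ => ?_
      push_cast; ring
    have hr : r + 1 + k = r + (k+1) := by omega
    rw [hp, hr]
    push_cast
    ring

lemma CM_one_div_Qp {c : ℝ} (hc : 0 < c) (r : ℕ) : CM (fun m => 1 / Qp c r m) := by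
  intro k m
  rw [deltaSeq_iter_one_div_Qp hc k r m]
  have h1 : (0:ℝ) ≤ ∏ t ∈ range k, ((r : ℝ) + t) :=
    Finset.prod_nonneg fun t _ => by positivity
  have h2 : (0:ℝ) < Qp c (r+k) m := Qp_pos hc _ _
  have : (-1:ℝ)^k * ((-1)^k * (∏ t ∈ range k, ((r : ℝ) + t)) * (1 / Qp c (r+k) m))
      = (∏ t ∈ range k, ((r : ℝ) + t)) * (1 / Qp c (r+k) m) := by
    rw [← mul_assoc, ← mul_assoc, ← pow_add, Even.neg_one_pow ⟨k, rfl⟩, one_mul]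
  rw [this]
  positivity

lemma CM.mul {f g : ℕ → ℝ} (hf : CM f) (hg : CM g) : CM (fun x => f x * g x) := by
  intro k m
  rw [deltaSeq_iter_mul, Finset.mul_sum]
  refine Finset.sum_nonneg fun a ha => ?_
  have hak : a ≤ k := by simpa [Nat.lt_succ_iff] using Finset.mem_range.mp ha
  have h1 := hf a m
  have h2 := hg (k-a) (m+a)
  have hsgn : (-1:ℝ)^k = (-1)^a * (-1)^(k-a) := by
    rw [← pow_add]; congr 1; omega
  have : (-1:ℝ)^k * ((k.choose a : ℝ) * DeltaSeq^[a] f m * DeltaSeq^[k-a] g (m+a))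
      = (k.choose a : ℝ) * (((-1:ℝ)^a * DeltaSeq^[a] f m) * ((-1:ℝ)^(k-a) * DeltaSeq^[k-a] g (m+a))) := by
    rw [hsgn]; ring
  rw [this]
  exact mul_nonneg (Nat.cast_nonneg _) (mul_nonneg h1 h2)

lemma CM_one_div_linear {c : ℝ} (hc : 0 < c) : CM (fun m => 1 / ((m : ℝ) + c)) := by
  have : (fun m : ℕ => 1 / ((m : ℝ) + c)) = fun m : ℕ => 1 / Qp c 1 m := by
    funext m; rw [Qp, Finset.prod_range_one]; norm_num
  rw [this]
  exact CM_one_div_Qp hc 1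

lemma CM_one_div_linear_pow {c : ℝ} (hc : 0 < c) (k : ℕ) :
    CM (fun m => (1 / ((m : ℝ) + c))^(k+1)) := by
  induction k with
  | zero => simpa using CM_one_div_linear hc
  | succ k ih =>
    have : (fun m : ℕ => (1 / ((m : ℝ) + c))^(k+1+1))
        = fun m : ℕ => (1 / ((m : ℝ) + c))^(k+1) * (1 / ((m : ℝ) + c)) := by
      funext m; ring
    rw [this]
    exact CM.mul ih (CM_one_div_linear hc)

lemma delta2_iter (x : ℕ → ℕ → ℝ) (j m : ℕ) :
    (Delta2^[j] x) m = DeltaSeq^[j] (x m) := by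
  induction j generalizing x with
  | zero => rfl
  | succ j ih =>
    rw [Function.iterate_succ_apply, ih (Delta2 x)]
    rfl

lemma delta1_iter (y : ℕ → ℕ → ℝ) (i m n : ℕ) :
    (Delta1^[i] y) m n = DeltaSeq^[i] (fun m' => y m' n) m := by
  induction i generalizing y with
  | zero => rfl
  | succ i ih =>
    rw [Function.iterate_succ_apply, ih (Delta1 y)]
    rfl

/-- A product `u m * w (m + n)` of completely monotone sequences is joint CM. -/
lemma jointCM_prod_shift (u w : ℕ → ℝ) (hu : CM u) (hw : CM w) :
    JointCM (fun m n => u m * w (m + n)) := by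
  intro i j m n
  rw [delta1_iter]
  have h1 : (fun m' => (Delta2^[j] (fun m n => u m * w (m + n))) m' n)
      = fun m' => u m' * DeltaSeq^[j] w (m' + n) := by
    funext m'
    rw [delta2_iter]
    have : (fun n => u m' * w (m' + n)) = fun n => u m' * w (n + m') := by
      funext n'; rw [Nat.add_comm]
    rw [this]
    rw [deltaSeq_iter_const_mul (u m') (fun n => w (n + m')) j n]
    rw [deltaSeq_iter_shift w m' j n, Nat.add_comm]
  rw [h1]
  have h2 : (fun m' => u m' * DeltaSeq^[j] w (m' + n))
      = fun m' => u m' * ((fun m' => DeltaSeq^[j] w (m' + n)) m') := rfl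
  rw [h2, deltaSeq_iter_mul]
  rw [Finset.mul_sum]
  refine Finset.sum_nonneg fun a ha => ?_
  have hak : a ≤ i := by simpa [Nat.lt_succ_iff] using Finset.mem_range.mp ha
  have hshift : DeltaSeq^[i-a] (fun m' => DeltaSeq^[j] w (m' + n)) (m+a)
      = DeltaSeq^[i-a+j] w (m+a+n) := by
    rw [deltaSeq_iter_shift (DeltaSeq^[j] w) n (i-a) (m+a), ← Function.iterate_add_apply]
  rw [hshift]
  have h3 := hu a m
  have h4 := hw (i-a+j) (m+a+n)
  have hsgn : (-1:ℝ)^(i+j) = (-1)^a * (-1)^(i-a+j) := by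
    rw [← pow_add]; congr 1; omega
  have : (-1:ℝ)^(i+j) * ((i.choose a : ℝ) * DeltaSeq^[a] u m * DeltaSeq^[i-a+j] w (m+a+n))
      = (i.choose a : ℝ) * (((-1:ℝ)^a * DeltaSeq^[a] u m) * ((-1:ℝ)^(i-a+j) * DeltaSeq^[i-a+j] w (m+a+n))) := by
    rw [hsgn]; ring
  rw [this]
  exact mul_nonneg (Nat.cast_nonneg _) (mul_nonneg h3 h4)

lemma summable_deltaSeq_iter {ι : Type*} (f : ι → ℕ → ℝ)
    (hf : ∀ n, Summable fun k => f k n) (j n : ℕ) :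
    Summable fun k => DeltaSeq^[j] (f k) n := by
  induction j generalizing f with
  | zero => exact hf n
  | succ j ih =>
    simp only [Function.iterate_succ_apply]
    exact ih (fun k => DeltaSeq (f k)) (fun n' => ((hf (n'+1)).sub (hf n'))) 

lemma tsum_deltaSeq_iter {ι : Type*} (f : ι → ℕ → ℝ)
    (hf : ∀ n, Summable fun k => f k n) (j n : ℕ) :
    DeltaSeq^[j] (fun n => ∑' k, f k n) n = ∑' k, DeltaSeq^[j] (f k) n := by
  induction j generalizing f with
  | zero => rfl
  | succ j ih =>
    rw [Function.iterate_succ_apply]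
    have hD : DeltaSeq (fun n => ∑' k, f k n) = fun n => ∑' k, DeltaSeq (f k) n := by
      funext n'
      simp only [DeltaSeq]
      exact (Summable.tsum_sub (hf (n'+1)) (hf n')).symm
    rw [hD, ih (fun k => DeltaSeq (f k)) (fun n' => ((hf (n'+1)).sub (hf n')))]
    simp only [← Function.iterate_succ_apply]

lemma jointCM_tsum {ι : Type*} (t : ι → ℕ → ℕ → ℝ) (ht : ∀ k, JointCM (t k))
    (hs : ∀ m n, Summable fun k => t k m n) :
    JointCM (fun m n => ∑' k, t k m n) := by
  intro i j m n
  have h1 : (fun m' => (Delta2^[j] (fun m n => ∑' k, t k m n)) m' n)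
      = fun m' => ∑' k, (Delta2^[j] (t k)) m' n := by
    funext m'
    rw [delta2_iter]
    have := tsum_deltaSeq_iter (fun k => t k m') (hs m') j n
    rw [this]
    exact tsum_congr fun k => by rw [delta2_iter]
  rw [delta1_iter, h1]
  have hsum : ∀ m', Summable fun k => (Delta2^[j] (t k)) m' n := by
    intro m'
    have : (fun k => (Delta2^[j] (t k)) m' n) = fun k => DeltaSeq^[j] (t k m') n := by
      funext k; rw [delta2_iter]
    rw [this]
    exact summable_deltaSeq_iter (fun k => t k m') (hs m') j n
  have h2 : DeltaSeq^[i] (fun m' => ∑' k, (Delta2^[j] (t k)) m' n) m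
      = ∑' k, DeltaSeq^[i] (fun m' => (Delta2^[j] (t k)) m' n) m := by
    -- need to view as sequences in m'
    have := tsum_deltaSeq_iter (fun k m' => (Delta2^[j] (t k)) m' n)
      (fun m' => hsum m') i m
    exact this
  rw [h2]
  have h3 : ∀ k, DeltaSeq^[i] (fun m' => (Delta2^[j] (t k)) m' n) m
      = (Delta1^[i] (Delta2^[j] (t k))) m n := fun k => (delta1_iter _ i m n).symm
  rw [tsum_congr h3, ← tsum_mul_left]
  exact tsum_nonneg fun k => ht k i j m n


/-- Remark: the net `(m,n) ↦ 1/((m+1)(m+3) + (m+2)n)` is joint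
completely monotone, even though with `b₁ = 1, b₂ = 3, a₁ = 2` neither
`b₁·b₂ ≤ a₁` nor `b₁ + b₂ ≤ a₁` holds. -/
theorem remark_example_jointCM :
    JointCM (fun m n : ℕ =>
        1 / (((m : ℝ) + 1) * ((m : ℝ) + 3) + ((m : ℝ) + 2) * n)) ∧
    ¬ ((1 : ℝ) * 3 ≤ 2) ∧ ¬ ((1 : ℝ) + 3 ≤ 2) := by
  refine ⟨?_, by norm_num, by norm_num⟩
  -- the summands
  set t : ℕ → ℕ → ℕ → ℝ := fun k m n =>
    (1 / ((m : ℝ) + 2))^(k+1) * (1 / (((m + n : ℕ) : ℝ) + 2))^(k+1) with ht_def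
  have hterm : ∀ k m n : ℕ, t k m n
      = ((1 / (((m : ℝ) + 2) * ((m : ℝ) + (n : ℝ) + 2))))^(k+1) := by
    intro k m n
    rw [ht_def]
    push_cast
    rw [← mul_pow, div_mul_div_comm, one_mul]
  have hq : ∀ m n : ℕ, (0:ℝ) ≤ 1 / (((m : ℝ) + 2) * ((m : ℝ) + (n : ℝ) + 2))
      ∧ 1 / (((m : ℝ) + 2) * ((m : ℝ) + (n : ℝ) + 2)) < 1 := by
    intro m n
    constructor
    · positivity
    · rw [div_lt_one (by positivity)]
      nlinarith [Nat.cast_nonneg (α := ℝ) m, Nat.cast_nonneg (α := ℝ) n]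
  have hsum : ∀ m n : ℕ, Summable fun k => t k m n := by
    intro m n
    have h := hq m n
    have : (fun k => t k m n)
        = fun k => (1 / (((m : ℝ) + 2) * ((m : ℝ) + (n : ℝ) + 2)))
            * (1 / (((m : ℝ) + 2) * ((m : ℝ) + (n : ℝ) + 2)))^k := by
      funext k; rw [hterm k m n, pow_succ']
    rw [this]
    exact (summable_geometric_of_lt_one h.1 h.2).mul_left _
  have key : (fun m n : ℕ => 1 / (((m : ℝ) + 1) * ((m : ℝ) + 3) + ((m : ℝ) + 2) * n))
      = fun m n : ℕ => ∑' k : ℕ, t k m n := by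
    funext m n
    have h := hq m n
    set q : ℝ := 1 / (((m : ℝ) + 2) * ((m : ℝ) + (n : ℝ) + 2)) with hqdef
    have h1 : ∑' k : ℕ, t k m n = q * (1 - q)⁻¹ := by
      have e : (fun k : ℕ => t k m n) = fun k => q * q^k := by
        funext k; rw [hterm k m n, pow_succ']
      rw [e, tsum_mul_left, tsum_geometric_of_lt_one h.1 h.2]
    rw [h1, hqdef]
    have hne1 : (((m : ℝ) + 2) * ((m : ℝ) + (n : ℝ) + 2)) ≠ 0 := by positivity
    have hne2 : (((m : ℝ) + 1) * ((m : ℝ) + 3) + ((m : ℝ) + 2) * (n:ℝ)) ≠ 0 := by positivity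
    have hD : (((m : ℝ) + 1) * ((m : ℝ) + 3) + ((m : ℝ) + 2) * (n:ℝ)) ≠ 0 := hne2
    have hAB1 : (0:ℝ) < ((m : ℝ) + 2) * ((m : ℝ) + (n : ℝ) + 2) - 1 := by
      nlinarith [Nat.cast_nonneg (α := ℝ) m, Nat.cast_nonneg (α := ℝ) n]
    rw [one_sub_div hne1, inv_div, div_mul_div_comm, one_mul]
    rw [div_eq_div_iff hD (by positivity)]
    ring
  rw [key]
  refine jointCM_tsum t ?_ hsum
  intro k
  have h2 : (0:ℝ) < 2 := by norm_num
  exact jointCM_prod_shift (fun m => (1 / ((m : ℝ) + 2))^(k+1))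
    (fun v => (1 / ((v : ℝ) + 2))^(k+1))
    (CM_one_div_linear_pow h2 k) (CM_one_div_linear_pow h2 k)
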